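/- Sum of the double factorial geometric progression: ∑_{k=0}^{m} (1 − a_{k+1} b_{k+1}) · ((x|a)^k / (x;b)^{k+1}) · ((z|b)^k / (z;a)^{k+1}) = (1 − ((x|a)^{m+1}/(x;b)^{m+1}) · ((z|b)^{m+1}/(z;a)^{m+1})) / (1 − x z), where (x|a)^k = (x−a₁)(x−a₂)⋯(x−a_k) and (x;b)^k = (1−b₁x)(1−b₂x)⋯(1−b_k x), with (x|a)^0 = (x;b)^0 = 1. -/

import Mathlib

open Finset

/-- Sum of the double factorial geometric progression:
`∑_{k=0}^{m} (1 − a_{k+1}b_{k+1}) (x|a)^k/(x;b)^{k+1} (z|b)^k/(z;a)^{k+1}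
 = (1 − ((x|a)^{m+1}/(x;b)^{m+1})((z|b)^{m+1}/(z;a)^{m+1})) / (1 − xz)`,
where `(x|a)^k = ∏_{j=1}^k (x−a_j)` and `(x;b)^k = ∏_{j=1}^k (1−b_j x)`. -/
theorem double_factorial_geometric_progression {F : Type*} [Field F] (m : ℕ) (x z : F)
    (a b : ℕ → F)
    (hxz : 1 - x * z ≠ 0)
    (hb : ∀ k ∈ Finset.Icc 1 (m + 1), 1 - b k * x ≠ 0)
    (ha : ∀ k ∈ Finset.Icc 1 (m + 1), 1 - a k * z ≠ 0) :
    ∑ k ∈ Finset.range (m + 1),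
        (1 - a (k + 1) * b (k + 1)) *
          ((∏ j ∈ Finset.Icc 1 k, (x - a j)) / (∏ j ∈ Finset.Icc 1 (k + 1), (1 - b j * x))) *
          ((∏ j ∈ Finset.Icc 1 k, (z - b j)) / (∏ j ∈ Finset.Icc 1 (k + 1), (1 - a j * z))) =
      (1 - ((∏ j ∈ Finset.Icc 1 (m + 1), (x - a j)) /
              (∏ j ∈ Finset.Icc 1 (m + 1), (1 - b j * x))) *
            ((∏ j ∈ Finset.Icc 1 (m + 1), (z - b j)) /
              (∏ j ∈ Finset.Icc 1 (m + 1), (1 - a j * z)))) /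
      (1 - x * z) := by
  induction m with
  | zero =>
      simp only [Finset.sum_range_one, Finset.Icc_self, Finset.prod_singleton, zero_add,
        show Finset.Icc 1 0 = ∅ from rfl, Finset.prod_empty]
      have hb1 := hb 1 (by simp)
      have ha1 := ha 1 (by simp)
      field_simp
      ring
  | succ n ih =>
      have hb' : ∀ k ∈ Finset.Icc 1 (n + 1), 1 - b k * x ≠ 0 := fun k hk =>
        hb k (Finset.Icc_subset_Icc_right (by omega) hk)
      have ha' : ∀ k ∈ Finset.Icc 1 (n + 1), 1 - a k * z ≠ 0 := fun k hk =>
        ha k (Finset.Icc_subset_Icc_right (by omega) hk)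
      rw [Finset.sum_range_succ, ih hb' ha']
      have hBprod : (∏ j ∈ Finset.Icc 1 (n + 1), (1 - b j * x)) ≠ 0 :=
        Finset.prod_ne_zero_iff.mpr hb'
      have hAprod : (∏ j ∈ Finset.Icc 1 (n + 1), (1 - a j * z)) ≠ 0 :=
        Finset.prod_ne_zero_iff.mpr ha'
      have hbL : 1 - b (n + 2) * x ≠ 0 := hb (n + 2) (by simp)
      have haL : 1 - a (n + 2) * z ≠ 0 := ha (n + 2) (by simp)
      have hB2 : (∏ j ∈ Finset.Icc 1 (n + 2), (1 - b j * x)) =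
          (∏ j ∈ Finset.Icc 1 (n + 1), (1 - b j * x)) * (1 - b (n + 2) * x) := by
        rw [← Finset.prod_Icc_succ_top (by omega)]
      have hA2 : (∏ j ∈ Finset.Icc 1 (n + 2), (1 - a j * z)) =
          (∏ j ∈ Finset.Icc 1 (n + 1), (1 - a j * z)) * (1 - a (n + 2) * z) := by
        rw [← Finset.prod_Icc_succ_top (by omega)]
      have hX2 : (∏ j ∈ Finset.Icc 1 (n + 2), (x - a j)) =
          (∏ j ∈ Finset.Icc 1 (n + 1), (x - a j)) * (x - a (n + 2)) := by
        rw [← Finset.prod_Icc_succ_top (by omega)]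
      have hZ2 : (∏ j ∈ Finset.Icc 1 (n + 2), (z - b j)) =
          (∏ j ∈ Finset.Icc 1 (n + 1), (z - b j)) * (z - b (n + 2)) := by
        rw [← Finset.prod_Icc_succ_top (by omega)]
      rw [hB2, hA2, hX2, hZ2]
      generalize (∏ j ∈ Finset.Icc 1 (n + 1), (1 - b j * x)) = B at hBprod ⊢
      generalize (∏ j ∈ Finset.Icc 1 (n + 1), (1 - a j * z)) = A at hAprod ⊢
      generalize (∏ j ∈ Finset.Icc 1 (n + 1), (x - a j)) = X
      generalize (∏ j ∈ Finset.Icc 1 (n + 1), (z - b j)) = Z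
      generalize b (n + 1 + 1) = b2 at hbL ⊢
      generalize a (n + 1 + 1) = a2 at haL ⊢
      rw [div_add' _ _ _ hxz, div_left_inj' hxz]
      field_simp
      ring
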